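/- There exist constants C > 0 and 1/2 < γ < 1 such that the growth function of the first Grigorchuk group G with respect to S = {a, b, c, d} satisfies γ_G^S(n) ≤ exp(C n^γ) for every n ∈ ℕ; in particular, G is of subexponential growth. -/

import Mathlib

noncomputable section

/-! ### The Grigorchuk generators -/

namespace Grig

def aFun : List Bool → List Bool
  | [] => []
  | x :: w => (!x) :: w

mutual
  def bFun : List Bool → List Bool
    | [] => []
    | false :: w => false :: aFun w
    | true :: w => true :: cFun w
  def cFun : List Bool → List Bool
    | [] => []
    | false :: w => false :: aFun w
    | true :: w => true :: dFun w
  def dFun : List Bool → List Bool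
    | [] => []
    | false :: w => false :: w
    | true :: w => true :: bFun w
end

theorem aFun_involutive : Function.Involutive aFun := by
  intro w
  match w with
  | [] => rfl
  | x :: w => simp [aFun]

theorem bcd_involutive :
    ∀ w : List Bool, bFun (bFun w) = w ∧ cFun (cFun w) = w ∧ dFun (dFun w) = w := by
  intro w
  induction w with
  | nil => exact ⟨rfl, rfl, rfl⟩
  | cons x w ih =>
    rcases x with _ | _
    · simp [bFun, cFun, dFun, aFun_involutive w]
    · simp [bFun, cFun, dFun, ih.1, ih.2.1, ih.2.2]

theorem bFun_involutive : Function.Involutive bFun := fun w => (bcd_involutive w).1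
theorem cFun_involutive : Function.Involutive cFun := fun w => (bcd_involutive w).2.1
theorem dFun_involutive : Function.Involutive dFun := fun w => (bcd_involutive w).2.2

theorem aFun_length : ∀ w : List Bool, (aFun w).length = w.length := by
  intro w
  match w with
  | [] => rfl
  | x :: w => simp [aFun]

theorem bcd_length : ∀ w : List Bool,
    (bFun w).length = w.length ∧ (cFun w).length = w.length ∧ (dFun w).length = w.length := by
  intro w
  induction w with
  | nil => exact ⟨rfl, rfl, rfl⟩
  | cons x w ih =>
    rcases x with _ | _
    · simp [bFun, cFun, dFun, aFun_length w]
    · simp [bFun, cFun, dFun, ih.1, ih.2.1, ih.2.2]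

theorem bFun_length : ∀ w, (bFun w).length = w.length := fun w => (bcd_length w).1
theorem cFun_length : ∀ w, (cFun w).length = w.length := fun w => (bcd_length w).2.1
theorem dFun_length : ∀ w, (dFun w).length = w.length := fun w => (bcd_length w).2.2

/-- The generators of the first Grigorchuk group as permutations of the vertex set
`{0,1}*` of the rooted binary tree. -/
def aPerm : Equiv.Perm (List Bool) := aFun_involutive.toPerm
def bPerm : Equiv.Perm (List Bool) := bFun_involutive.toPerm
def cPerm : Equiv.Perm (List Bool) := cFun_involutive.toPerm
def dPerm : Equiv.Perm (List Bool) := dFun_involutive.toPerm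

/-- The generating set `S = {a, b, c, d}` (a set of involutions). -/
def Sset : Set (Equiv.Perm (List Bool)) := {aPerm, bPerm, cPerm, dPerm}

/-- The first Grigorchuk group. -/
def Grigorchuk : Subgroup (Equiv.Perm (List Bool)) := Subgroup.closure Sset

/-- Word length with respect to `S = {a, b, c, d}`. -/
def wordLength (g : Equiv.Perm (List Bool)) : ℕ :=
  sInf {k | ∃ l : List (Equiv.Perm (List Bool)),
    (∀ x ∈ l, x ∈ Sset) ∧ l.length = k ∧ l.prod = g}

/-- The growth function of the first Grigorchuk group with respect to `S`. -/
def growthGrig (m : ℕ) : ℕ :=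
  Nat.card {g : Equiv.Perm (List Bool) |
    ∃ l : List (Equiv.Perm (List Bool)), (∀ x ∈ l, x ∈ Sset) ∧ l.length ≤ m ∧ l.prod = g}

/-! ### Level transfer -/

def levelFun (n : ℕ) (f : List Bool → List Bool) (v : Fin n → Bool) : Fin n → Bool :=
  fun i => (f (List.ofFn v)).getD i false

theorem levelFun_involutive (n : ℕ) (f : List Bool → List Bool)
    (hlen : ∀ l, (f l).length = l.length) (hinv : Function.Involutive f) :
    Function.Involutive (levelFun n f) := by
  intro v
  have key : ∀ u : Fin n → Bool, List.ofFn (levelFun n f u) = f (List.ofFn u) := by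
    intro u
    apply List.ext_getElem
    · simp [hlen]
    · intro i h1 h2
      simp only [List.getElem_ofFn]
      simp [levelFun, List.getD_eq_getElem, h2]
  funext i
  simp only [levelFun, key v, hinv (List.ofFn v)]
  simp [List.getD_eq_getElem]

/-- The images `a_n, b_n, c_n, d_n` of the Grigorchuk generators in `Sym(X_n)`,
where the `n`-th level `X_n = {0,1}^n` is identified with `Fin n → Bool`. -/
def aLev (n : ℕ) : Equiv.Perm (Fin n → Bool) :=
  (levelFun_involutive n aFun aFun_length aFun_involutive).toPerm
def bLev (n : ℕ) : Equiv.Perm (Fin n → Bool) :=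
  (levelFun_involutive n bFun bFun_length bFun_involutive).toPerm
def cLev (n : ℕ) : Equiv.Perm (Fin n → Bool) :=
  (levelFun_involutive n cFun cFun_length cFun_involutive).toPerm
def dLev (n : ℕ) : Equiv.Perm (Fin n → Bool) :=
  (levelFun_involutive n dFun dFun_length dFun_involutive).toPerm

end Grig

namespace GrigAux
open Grig

/-- Klein relations, first triple. -/
theorem kl1 : ∀ w : List Bool, bFun (cFun w) = dFun w ∧ cFun (dFun w) = bFun w ∧
    dFun (bFun w) = cFun w := by
  intro w
  induction w with
  | nil => exact ⟨rfl, rfl, rfl⟩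
  | cons x w ih =>
    rcases x with _ | _
    · simp [bFun, cFun, dFun, aFun_involutive w]
    · simp [bFun, cFun, dFun, ih.1, ih.2.1, ih.2.2]

theorem kl2 : ∀ w : List Bool, cFun (bFun w) = dFun w ∧ dFun (cFun w) = bFun w ∧
    bFun (dFun w) = cFun w := by
  intro w
  induction w with
  | nil => exact ⟨rfl, rfl, rfl⟩
  | cons x w ih =>
    rcases x with _ | _
    · simp [bFun, cFun, dFun, aFun_involutive w]
    · simp [bFun, cFun, dFun, ih.1, ih.2.1, ih.2.2]

end GrigAux

-- appended to namespace GrigAux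
namespace GrigAux
open Grig

inductive L4 | A | B | C | D
deriving DecidableEq

instance : Fintype L4 :=
  Fintype.ofList [L4.A, L4.B, L4.C, L4.D] (fun x => by cases x <;> simp)

open L4

def evF : L4 → (List Bool → List Bool)
  | A => aFun | B => bFun | C => cFun | D => dFun

def eval (w : List L4) : List Bool → List Bool :=
  w.foldr (fun s f => evF s ∘ f) id

@[simp] theorem eval_nil : eval [] = id := rfl
@[simp] theorem eval_cons (s : L4) (w : List L4) : eval (s :: w) = evF s ∘ eval w := rfl

theorem eval_append (u v : List L4) : eval (u ++ v) = eval u ∘ eval v := by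
  induction u with
  | nil => rfl
  | cons s u ih => simp [eval_cons, ih, Function.comp_assoc]

def isA : L4 → Bool | A => true | _ => false

/-- activity at the root : parity of A's -/
def act (w : List L4) : Bool := w.foldr (fun s b => xor (isA s) b) false

@[simp] theorem act_nil : act [] = false := rfl
@[simp] theorem act_cons (s : L4) (w : List L4) : act (s :: w) = xor (isA s) (act w) := rfl

def secL : L4 → Bool → List L4
  | A, _ => []
  | B, false => [A] | B, true => [C]
  | C, false => [A] | C, true => [D]
  | D, false => [] | D, true => [B]

def secW : List L4 → Bool → List L4
  | [], _ => []
  | s :: w, x => secL s (xor x (act w)) ++ secW w x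

theorem evF_cons (s : L4) (y : Bool) (v : List Bool) :
    evF s (y :: v) = (xor y (isA s)) :: eval (secL s y) v := by
  cases s <;> cases y <;>
    simp [evF, secL, isA, aFun, bFun, cFun, dFun, eval]

@[simp] theorem eval_nil_arg (w : List L4) : eval w [] = [] := by
  induction w with
  | nil => rfl
  | cons s w ih =>
    have : evF s [] = [] := by cases s <;> rfl
    simp [eval_cons, ih, this]

/-- The key structural lemma : evaluation acts on the first letter by the root
activity and on the tail by the section words. -/
theorem eval_cons_arg (w : List L4) (x : Bool) (v : List Bool) :
    eval w (x :: v) = (xor x (act w)) :: eval (secW w x) v := by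
  induction w with
  | nil => simp [secW]
  | cons s w ih =>
    simp only [eval_cons, Function.comp_apply, ih, evF_cons, secW, act_cons, eval_append]
    congr 1
    cases x <;> cases act w <;> cases isA s <;> rfl

end GrigAux

namespace GrigAux
open Grig L4

def wt : L4 → ℕ | A => 91 | B => 125 | C => 89 | D => 59

def wtW (w : List L4) : ℕ := (w.map wt).sum

@[simp] theorem wtW_nil : wtW [] = 0 := rfl
@[simp] theorem wtW_cons (s : L4) (w : List L4) : wtW (s :: w) = wt s + wtW w := rfl
theorem wtW_append (u v : List L4) : wtW (u ++ v) = wtW u + wtW v := by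
  simp [wtW]

theorem wt_pos (s : L4) : 0 < wt s := by cases s <;> simp [wt]
theorem wt_le (s : L4) : wt s ≤ 125 := by cases s <;> simp [wt]

theorem length_le_wtW (w : List L4) : w.length ≤ wtW w := by
  induction w with
  | nil => simp
  | cons s w ih => have := wt_pos s; simp only [List.length_cons, wtW_cons]; omega

theorem wtW_le_mul_length (w : List L4) : wtW w ≤ 125 * w.length := by
  induction w with
  | nil => simp
  | cons s w ih =>
    have := wt_le s
    simp only [wtW_cons, List.length_cons, Nat.mul_succ]
    omega

/-- cancellation push -/
def push : L4 → List L4 → List L4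
  | s, [] => [s]
  | A, A :: r => r
  | A, t :: r => A :: t :: r
  | B, A :: r => B :: A :: r
  | B, B :: r => r
  | B, C :: r => D :: r
  | B, D :: r => C :: r
  | C, A :: r => C :: A :: r
  | C, B :: r => D :: r
  | C, C :: r => r
  | C, D :: r => B :: r
  | D, A :: r => D :: A :: r
  | D, B :: r => C :: r
  | D, C :: r => B :: r
  | D, D :: r => r

def reduce : List L4 → List L4
  | [] => []
  | s :: w => push s (reduce w)

theorem aa : ∀ v, aFun (aFun v) = v := aFun_involutive
theorem bb : ∀ v, bFun (bFun v) = v := fun v => (bcd_involutive v).1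
theorem cc : ∀ v, cFun (cFun v) = v := fun v => (bcd_involutive v).2.1
theorem dd : ∀ v, dFun (dFun v) = v := fun v => (bcd_involutive v).2.2
theorem bc_d : ∀ v, bFun (cFun v) = dFun v := fun v => (kl1 v).1
theorem cd_b : ∀ v, cFun (dFun v) = bFun v := fun v => (kl1 v).2.1
theorem db_c : ∀ v, dFun (bFun v) = cFun v := fun v => (kl1 v).2.2
theorem cb_d : ∀ v, cFun (bFun v) = dFun v := fun v => (kl2 v).1
theorem dc_b : ∀ v, dFun (cFun v) = bFun v := fun v => (kl2 v).2.1
theorem bd_c : ∀ v, bFun (dFun v) = cFun v := fun v => (kl2 v).2.2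

theorem eval_push (s : L4) (r : List L4) : eval (push s r) = evF s ∘ eval r := by
  cases r with
  | nil => simp [push]
  | cons t r =>
    cases s <;> cases t <;>
      (funext v;
       simp [push, eval_cons, Function.comp, evF, aa, bb, cc, dd, bc_d, cd_b, db_c,
         cb_d, dc_b, bd_c])

theorem eval_reduce (w : List L4) : eval (reduce w) = eval w := by
  induction w with
  | nil => rfl
  | cons s w ih => simp [reduce, eval_push, ih]

theorem wtW_push (s : L4) (r : List L4) : wtW (push s r) ≤ wt s + wtW r := by
  cases r with
  | nil => simp [push]
  | cons t r => cases s <;> cases t <;> simp [push, wt] <;> omega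

theorem wtW_reduce (w : List L4) : wtW (reduce w) ≤ wtW w := by
  induction w with
  | nil => simp [reduce]
  | cons s w ih =>
    calc wtW (push s (reduce w)) ≤ wt s + wtW (reduce w) := wtW_push _ _
    _ ≤ wt s + wtW w := by omega
    _ = wtW (s :: w) := rfl

/-- alternating (reduced) words -/
def isAlt (w : List L4) : Prop := List.Chain' (fun u v => isA u ≠ isA v) w

theorem isAlt_push (s : L4) (r : List L4) (h : isAlt r) : isAlt (push s r) := by
  cases r with
  | nil => cases s <;> exact List.isChain_singleton _
  | cons t r =>
    have h2 : isAlt r := h.tail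
    have h3 : ∀ u, isA u = isA t → isAlt (u :: r) := by
      intro u hu
      cases r with
      | nil => exact List.isChain_singleton _
      | cons v r =>
        refine List.isChain_cons_cons.2 ⟨?_, (List.isChain_cons_cons.1 h).2⟩
        rw [hu]; exact (List.isChain_cons_cons.1 h).1
    cases s <;> cases t <;>
      first
        | exact h2
        | exact h3 _ rfl
        | · refine List.isChain_cons_cons.2 ⟨by simp [isA], h⟩

theorem isAlt_reduce (w : List L4) : isAlt (reduce w) := by
  induction w with
  | nil => exact List.isChain_nil
  | cons s w ih => exact isAlt_push s _ ih

end GrigAux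

namespace GrigAux
open Grig L4

/-- total weight of the two sections of a letter -/
def T : L4 → ℕ | A => 0 | B => 180 | C => 150 | D => 125

def Tsum (w : List L4) : ℕ := (w.map T).sum

@[simp] theorem Tsum_nil : Tsum [] = 0 := rfl
@[simp] theorem Tsum_cons (s : L4) (w : List L4) : Tsum (s :: w) = T s + Tsum w := rfl

theorem secL_pair_wt (s : L4) (b : Bool) : wtW (secL s b) + wtW (secL s (!b)) = T s := by
  cases s <;> cases b <;> simp [secL, wt, T, wtW]

theorem secW_wt (w : List L4) : wtW (secW w false) + wtW (secW w true) ≤ Tsum w := by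
  induction w with
  | nil => simp [secW]
  | cons s w ih =>
    simp only [secW, wtW_append, Tsum_cons]
    have h := secL_pair_wt s (xor false (act w))
    have : (!xor false (act w)) = xor true (act w) := by cases act w <;> rfl
    rw [this] at h
    omega

theorem tsum_le_of_alt : ∀ w : List L4, isAlt w → 6 * Tsum w ≤ 5 * wtW w + 1080
  | [], _ => by simp
  | [s], _ => by
    have h1 : 6 * T s ≤ 1080 := by cases s <;> simp [T]
    simp only [Tsum_cons, Tsum_nil, wtW_cons, wtW_nil]
    omega
  | s :: t :: w, h => by
    have hw : isAlt w := (h.tail).tail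
    have ih := tsum_le_of_alt w hw
    have hst : isA s ≠ isA t := (List.isChain_cons_cons.1 h).1
    have hpair : 6 * (T s + T t) ≤ 5 * (wt s + wt t) := by
      cases s <;> cases t <;> simp [isA] at hst ⊢ <;> simp [T, wt]
    simp only [Tsum_cons, wtW_cons]
    omega

theorem secW_wt_of_alt (w : List L4) (h : isAlt w) :
    6 * (wtW (secW w false) + wtW (secW w true)) ≤ 5 * wtW w + 1080 :=
  le_trans (Nat.mul_le_mul_left 6 (secW_wt w)) (tsum_le_of_alt w h)

end GrigAux

namespace GrigAux
open Grig L4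

def Sx (x : ℕ) : Set (List Bool → List Bool) :=
  {g | ∃ w, isAlt w ∧ wtW w ≤ x ∧ eval w = g}

theorem Sx_subset_image (x : ℕ) : Sx x ⊆ eval '' {w : List L4 | w.length ≤ x} := by
  rintro g ⟨w, -, hwt, hev⟩
  exact ⟨w, le_trans (length_le_wtW w) hwt, hev⟩

theorem finSx (x : ℕ) : (Sx x).Finite :=
  Set.Finite.subset (Set.Finite.image eval (List.finite_length_le L4 x)) (Sx_subset_image x)

instance SxFinite (x : ℕ) : Finite (Sx x) := (finSx x).to_subtype

def F (x : ℕ) : ℕ := Nat.card (Sx x)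

theorem F_eq_ncard (x : ℕ) : F x = (Sx x).ncard := Nat.card_coe_set_eq _

/-- reconstruction of a tree map from its root activity and two sections -/
def recon (f : Bool) (g0 g1 : List Bool → List Bool) : List Bool → List Bool
  | [] => []
  | x :: v => (xor x f) :: (bif x then g1 v else g0 v)

theorem eval_eq_recon (w : List L4) :
    eval w = recon (act w) (eval (secW w false)) (eval (secW w true)) := by
  funext v
  cases v with
  | nil => simp [recon]
  | cons x v => cases x <;> simp [recon, eval_cons_arg]

/-- The contraction target. -/
def Yc (x : ℕ) : ℕ := (5 * x + 1080) / 6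

/-- generic: ncard of a finite biUnion over a range -/
theorem ncard_biUnion_range_le {α : Type*} (A : ℕ → Set α) :
    ∀ n : ℕ, (⋃ j ∈ Finset.range n, A j).ncard ≤ ∑ j ∈ Finset.range n, (A j).ncard := by
  intro n
  induction n with
  | zero => simp
  | succ n ih =>
    rw [Finset.range_add_one, Finset.set_biUnion_insert, Finset.sum_insert
      (by simp : n ∉ Finset.range n)]
    exact le_trans (Set.ncard_union_le _ _) (by omega)

def cov (Y : ℕ) (f : Bool) (j : ℕ) : Set (List Bool → List Bool) :=
  (fun p : (List Bool → List Bool) × (List Bool → List Bool) => recon f p.1 p.2) ''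
    (Sx j ×ˢ Sx (Y - j))

theorem ncard_cov_le (Y : ℕ) (f : Bool) (j : ℕ) : (cov Y f j).ncard ≤ F j * F (Y - j) := by
  have h1 : (cov Y f j).ncard ≤ (Sx j ×ˢ Sx (Y - j)).ncard :=
    Set.ncard_image_le (Set.Finite.prod (finSx j) (finSx (Y - j)))
  have h2 : (Sx j ×ˢ Sx (Y - j)).ncard = F j * F (Y - j) := by
    rw [← Nat.card_coe_set_eq, Nat.card_congr (Equiv.Set.prod _ _), Nat.card_prod, F, F]
  omega

theorem cov_finite (Y : ℕ) (f : Bool) (j : ℕ) : (cov Y f j).Finite :=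
  Set.Finite.image _ (Set.Finite.prod (finSx j) (finSx (Y - j)))

theorem Sx_subset_cov (x : ℕ) :
    Sx x ⊆ (⋃ j ∈ Finset.range (Yc x + 1), cov (Yc x) true j) ∪
      (⋃ j ∈ Finset.range (Yc x + 1), cov (Yc x) false j) := by
  rintro g ⟨w, halt, hwt, hev⟩
  set Y := Yc x with hY
  set u0 := reduce (secW w false) with hu0
  set u1 := reduce (secW w true) with hu1
  have h1 : wtW u0 ≤ wtW (secW w false) := wtW_reduce _
  have h2 : wtW u1 ≤ wtW (secW w true) := wtW_reduce _
  have hsum : wtW u0 + wtW u1 ≤ Y := by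
    rw [hY, Yc, Nat.le_div_iff_mul_le (by norm_num : 0 < 6)]
    have h3 := secW_wt_of_alt w halt
    omega
  have hg : g ∈ cov Y (act w) (wtW u0) := by
    refine ⟨(eval u0, eval u1), ⟨⟨u0, isAlt_reduce _, le_rfl, rfl⟩,
      ⟨u1, isAlt_reduce _, by omega, rfl⟩⟩, ?_⟩
    show recon (act w) (eval u0) (eval u1) = g
    rw [← hev, eval_eq_recon w, hu0, hu1, eval_reduce, eval_reduce]
  have hmem : wtW u0 ∈ Finset.range (Y + 1) := by
    simp only [Finset.mem_range]; omega
  cases hact : act w with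
  | true =>
    left; exact Set.mem_biUnion hmem (by rwa [hact] at hg)
  | false =>
    right; exact Set.mem_biUnion hmem (by rwa [hact] at hg)

theorem key_count (x : ℕ) :
    F x ≤ 2 * ∑ j ∈ Finset.range (Yc x + 1), F j * F (Yc x - j) := by
  set Y := Yc x with hY
  have hfin : ∀ f : Bool, (⋃ j ∈ Finset.range (Y + 1), cov Y f j).Finite :=
    fun f => Set.Finite.biUnion (Finset.range (Y + 1)).finite_toSet
      (fun j _ => cov_finite Y f j)
  have hbig : ((⋃ j ∈ Finset.range (Y + 1), cov Y true j) ∪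
      (⋃ j ∈ Finset.range (Y + 1), cov Y false j)).Finite :=
    Set.Finite.union (hfin true) (hfin false)
  have hstep : ∀ f : Bool,
      (⋃ j ∈ Finset.range (Y + 1), cov Y f j).ncard ≤
        ∑ j ∈ Finset.range (Y + 1), F j * F (Y - j) := by
    intro f
    refine le_trans (ncard_biUnion_range_le _ _) (Finset.sum_le_sum ?_)
    intro j _
    exact ncard_cov_le Y f j
  calc F x = (Sx x).ncard := F_eq_ncard x
    _ ≤ _ := Set.ncard_le_ncard (Sx_subset_cov x) hbig
    _ ≤ (⋃ j ∈ Finset.range (Y + 1), cov Y true j).ncard +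
        (⋃ j ∈ Finset.range (Y + 1), cov Y false j).ncard := Set.ncard_union_le _ _
    _ ≤ 2 * ∑ j ∈ Finset.range (Y + 1), F j * F (Y - j) := by
        have := hstep true; have := hstep false; omega

end GrigAux

namespace GrigAux
open Grig L4

theorem F_zero : F 0 ≤ 1 := by
  have hsub : Sx 0 ⊆ {id} := by
    rintro g ⟨w, -, hwt, hev⟩
    have : w.length = 0 := Nat.le_zero.1 (le_trans (length_le_wtW w) hwt)
    rw [List.length_eq_zero_iff.1 this] at hev
    simp only [Set.mem_singleton_iff, ← hev]
    rfl
  rw [F_eq_ncard]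
  exact le_trans (Set.ncard_le_ncard hsub (Set.finite_singleton _)) (le_of_eq
    (Set.ncard_singleton _))

theorem F_le_pow (x : ℕ) : F x ≤ 5 ^ x := by
  classical
  have h1 : F x ≤ Nat.card {w : List L4 | w.length ≤ x} := by
    rw [F_eq_ncard, Nat.card_coe_set_eq]
    refine le_trans (Set.ncard_le_ncard (Sx_subset_image x)
      (Set.Finite.image _ (List.finite_length_le L4 x))) ?_
    exact Set.ncard_image_le (List.finite_length_le L4 x)
  have h2 : Nat.card {w : List L4 | w.length ≤ x} ≤ Nat.card (Fin x → Option L4) := by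
    haveI : Finite {w : List L4 | w.length ≤ x} := (List.finite_length_le L4 x).to_subtype
    refine Nat.card_le_card_of_injective
      (fun w => fun i => (w : List L4)[(i : ℕ)]?) ?_
    rintro ⟨w, hw⟩ ⟨w', hw'⟩ h
    simp only [Set.mem_setOf_eq] at hw hw'
    simp only [Subtype.mk.injEq]
    apply List.ext_getElem?
    intro n
    by_cases hn : n < x
    · exact congrFun h ⟨n, hn⟩
    · rw [List.getElem?_eq_none, List.getElem?_eq_none] <;> omega
  have h3 : Nat.card (Fin x → Option L4) = 5 ^ x := by
    rw [Nat.card_fun, Nat.card_eq_fintype_card, Nat.card_eq_fintype_card]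
    simp [Fintype.card_option]
    rfl
  omega

end GrigAux

namespace GrigAux
open Grig L4 Real

/-- `x ^ (1/10) ≤ c` from `x ≤ c ^ 10`. -/
theorem rpow_tenth_le {x c : ℝ} (hx : 0 ≤ x) (hc : 0 ≤ c) (h : x ≤ c ^ (10 : ℕ)) :
    x ^ ((1:ℝ)/10) ≤ c := by
  have h1 : x ^ ((1:ℝ)/10) ≤ (c ^ (10:ℕ)) ^ ((1:ℝ)/10) :=
    Real.rpow_le_rpow hx h (by norm_num)
  rwa [← Real.rpow_natCast c 10, ← Real.rpow_mul hc,
    (by norm_num : ((10:ℕ):ℝ) * (1/10) = 1), Real.rpow_one] at h1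

/-- `c ≤ x ^ (4/5)` from `c ^ 5 ≤ x ^ 4`. -/
theorem le_rpow_fourfifth {x c : ℝ} (hx : 0 ≤ x) (hc : 0 ≤ c) (h : c ^ (5:ℕ) ≤ x ^ (4:ℕ)) :
    c ≤ x ^ ((4:ℝ)/5) := by
  have h1 : (c ^ (5:ℕ)) ^ ((1:ℝ)/5) ≤ (x ^ (4:ℕ)) ^ ((1:ℝ)/5) :=
    Real.rpow_le_rpow (by positivity) h (by norm_num)
  rwa [← Real.rpow_natCast c 5, ← Real.rpow_natCast x 4, ← Real.rpow_mul hc,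
    ← Real.rpow_mul hx, (by norm_num : ((5:ℕ):ℝ) * (1/5) = 1),
    (by norm_num : ((4:ℕ):ℝ) * (1/5) = 4/5), Real.rpow_one] at h1

/-- concavity of `t ^ (9/10)`. -/
theorem rpow_add_le {a b c : ℝ} (ha : 0 ≤ a) (hb : 0 ≤ b) (hab : a + b ≤ c) :
    a ^ ((9:ℝ)/10) + b ^ ((9:ℝ)/10) ≤ 2 * (c/2) ^ ((9:ℝ)/10) := by
  have hconc : ConcaveOn ℝ (Set.Ici 0) (fun t : ℝ => t ^ ((9:ℝ)/10)) :=
    (Real.strictConcaveOn_rpow (by norm_num) (by norm_num)).concaveOn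
  have h2 := hconc.2 (Set.mem_Ici.2 ha) (Set.mem_Ici.2 hb)
    (by norm_num : (0:ℝ) ≤ 1/2) (by norm_num : (0:ℝ) ≤ 1/2) (by norm_num)
  simp only [smul_eq_mul] at h2
  have hc : 0 ≤ c := le_trans (by positivity) hab
  have h3 : ((a + b)/2) ^ ((9:ℝ)/10) ≤ (c/2) ^ ((9:ℝ)/10) :=
    Real.rpow_le_rpow (by positivity) (by linarith) (by norm_num)
  have h4 : (1/2) * a + (1/2) * b = (a+b)/2 := by ring
  rw [h4] at h2
  nlinarith [h2, h3]

/-- numeric step : `2 * (23/50) ^ (9/10) ≤ 199/200`. -/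
theorem numeric_step : 2 * ((23:ℝ)/50) ^ ((9:ℝ)/10) ≤ 199/200 := by
  have h0 : (0:ℝ) ≤ (23:ℝ)/50 := by norm_num
  have key : (2 * ((23:ℝ)/50) ^ ((9:ℝ)/10)) ^ (10:ℕ) ≤ ((199:ℝ)/200) ^ (10:ℕ) := by
    have e1 : (((23:ℝ)/50) ^ ((9:ℝ)/10)) ^ (10:ℕ) = ((23:ℝ)/50) ^ (9:ℕ) := by
      rw [← Real.rpow_natCast (((23:ℝ)/50) ^ ((9:ℝ)/10)) 10, ← Real.rpow_mul h0,
        (by norm_num : ((9:ℝ)/10) * ((10:ℕ):ℝ) = ((9:ℕ):ℝ)), Real.rpow_natCast]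
    rw [mul_pow, e1]
    norm_num
  have h2 : (0:ℝ) ≤ 2 * ((23:ℝ)/50) ^ ((9:ℝ)/10) := by positivity
  exact le_of_pow_le_pow_left₀ (by norm_num) (by norm_num) key

/-- `t^2/4 ≤ exp t` for `t ≥ 0`. -/
theorem sq_div_four_le_exp {t : ℝ} (ht : 0 ≤ t) : t^2/4 ≤ Real.exp t := by
  have h1 : 1 + t/2 ≤ Real.exp (t/2) := by
    have := Real.add_one_le_exp (t/2); linarith
  have h2 : (t/2)^2 ≤ (1 + t/2)^2 := by nlinarith
  have h3 : (1 + t/2)^2 ≤ (Real.exp (t/2))^2 := by nlinarith [Real.exp_pos (t/2)]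
  have h4 : (Real.exp (t/2))^2 = Real.exp t := by
    rw [sq, ← Real.exp_add]
    congr 1
    ring
  nlinarith

theorem F_bound : ∀ x : ℕ, (F x : ℝ) ≤ Real.exp (100 * (x:ℝ) ^ ((9:ℝ)/10)) := by
  intro x
  induction x using Nat.strong_induction_on with
  | _ x ih =>
  rcases Nat.eq_zero_or_pos x with rfl | hx0
  · simp only [Nat.cast_zero, Real.zero_rpow (by norm_num : ((9:ℝ)/10) ≠ 0), mul_zero,
      Real.exp_zero]
    exact_mod_cast F_zero
  rcases le_or_gt x 2100 with hsmall | hbig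
  · -- base range : F x ≤ 5^x ≤ exp (2x) ≤ exp (100 x^(9/10))
    have h1 : (F x : ℝ) ≤ (5:ℝ) ^ (x:ℕ) := by
      exact_mod_cast F_le_pow x
    have h5 : (5:ℝ) ≤ Real.exp 2 := by
      have he : (2.7182818283:ℝ) < Real.exp 1 := Real.exp_one_gt_d9
      have : (2.7182818283:ℝ)^2 ≤ (Real.exp 1)^2 := by nlinarith
      have h2 : (Real.exp 1)^2 = Real.exp 2 := by
        rw [sq, ← Real.exp_add]
        norm_num
      nlinarith
    have h2 : (5:ℝ) ^ (x:ℕ) ≤ Real.exp (2 * x) := by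
      calc (5:ℝ) ^ (x:ℕ) ≤ (Real.exp 2) ^ (x:ℕ) :=
            pow_le_pow_left₀ (by norm_num) h5 x
        _ = Real.exp (2 * x) := by rw [← Real.exp_nat_mul]; ring_nf
    have hxpos : (0:ℝ) < (x:ℝ) := by exact_mod_cast hx0
    have h3 : 2 * (x:ℝ) ≤ 100 * (x:ℝ) ^ ((9:ℝ)/10) := by
      have hsplit : (x:ℝ) = (x:ℝ) ^ ((9:ℝ)/10) * (x:ℝ) ^ ((1:ℝ)/10) := by
        rw [← Real.rpow_add hxpos]
        norm_num
      have h10 : (x:ℝ) ^ ((1:ℝ)/10) ≤ 50 := by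
        apply rpow_tenth_le (le_of_lt hxpos) (by norm_num)
        have : (x:ℝ) ≤ 2100 := by exact_mod_cast hsmall
        calc (x:ℝ) ≤ 2100 := this
          _ ≤ (50:ℝ)^(10:ℕ) := by norm_num
      have hpow : (0:ℝ) ≤ (x:ℝ) ^ ((9:ℝ)/10) := Real.rpow_nonneg (le_of_lt hxpos) _
      calc 2 * (x:ℝ) = 2 * ((x:ℝ) ^ ((9:ℝ)/10) * (x:ℝ) ^ ((1:ℝ)/10)) := by rw [← hsplit]
        _ ≤ 2 * ((x:ℝ) ^ ((9:ℝ)/10) * 50) := by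
            apply mul_le_mul_of_nonneg_left _ (by norm_num)
            exact mul_le_mul_of_nonneg_left h10 hpow
        _ = 100 * (x:ℝ) ^ ((9:ℝ)/10) := by ring
    calc (F x : ℝ) ≤ (5:ℝ) ^ (x:ℕ) := h1
      _ ≤ Real.exp (2 * x) := h2
      _ ≤ Real.exp (100 * (x:ℝ) ^ ((9:ℝ)/10)) := Real.exp_le_exp.2 h3
  · -- inductive step
    set Y := Yc x with hY
    have hYx : Y < x := by rw [hY]; unfold Yc; omega
    have hY23 : 25 * Y ≤ 23 * x := by rw [hY]; unfold Yc; omega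
    have hxpos : (0:ℝ) < (x:ℝ) := by exact_mod_cast hx0
    have hx2100 : (2100:ℝ) ≤ (x:ℝ) := by exact_mod_cast hbig.le
    have hxα : (0:ℝ) ≤ (x:ℝ) ^ ((9:ℝ)/10) := Real.rpow_nonneg hxpos.le _
    have hterm : ∀ j ∈ Finset.range (Y+1),
        (F j : ℝ) * (F (Y - j) : ℝ) ≤ Real.exp ((199/2) * (x:ℝ) ^ ((9:ℝ)/10)) := by
      intro j hj
      have hjY : j ≤ Y := by
        have := Finset.mem_range.1 hj; omega
      have h1 := ih j (lt_of_le_of_lt hjY hYx)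
      have h2 := ih (Y - j) (lt_of_le_of_lt (Nat.sub_le _ _) hYx)
      have hmul : (F j : ℝ) * (F (Y-j) : ℝ) ≤
          Real.exp (100 * (j:ℝ) ^ ((9:ℝ)/10) + 100 * ((Y-j:ℕ):ℝ) ^ ((9:ℝ)/10)) := by
        rw [Real.exp_add]
        exact mul_le_mul h1 h2 (by positivity) (Real.exp_pos _).le
      refine le_trans hmul (Real.exp_le_exp.2 ?_)
      have hsum : (j:ℝ) + ((Y-j:ℕ):ℝ) ≤ (23/25) * (x:ℝ) := by
        have he : (j:ℝ) + ((Y-j:ℕ):ℝ) = ((Y:ℕ):ℝ) := by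
          rw [← Nat.cast_add]
          congr 1
          omega
        rw [he]
        have h25 : ((25:ℕ):ℝ) * ((Y:ℕ):ℝ) ≤ ((23:ℕ):ℝ) * ((x:ℕ):ℝ) := by
          rw [← Nat.cast_mul, ← Nat.cast_mul]
          exact_mod_cast hY23
        push_cast at h25
        linarith
      have hconc := rpow_add_le (Nat.cast_nonneg j) (Nat.cast_nonneg _) hsum
      have he2 : ((23/25) * (x:ℝ))/2 = (23/50) * (x:ℝ) := by ring
      rw [he2] at hconc
      have he3 : ((23/50) * (x:ℝ)) ^ ((9:ℝ)/10) =
          ((23:ℝ)/50) ^ ((9:ℝ)/10) * (x:ℝ) ^ ((9:ℝ)/10) :=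
        Real.mul_rpow (by norm_num) hxpos.le
      rw [he3] at hconc
      have hns := numeric_step
      nlinarith [hconc, hns, hxα]
    have hkc := key_count x
    have hcast : (F x : ℝ) ≤ 2 * ∑ j ∈ Finset.range (Y+1), (F j : ℝ) * (F (Y - j) : ℝ) := by
      have : ((F x : ℕ) : ℝ) ≤ ((2 * ∑ j ∈ Finset.range (Yc x + 1), F j * F (Yc x - j) : ℕ) : ℝ) := by
        exact_mod_cast hkc
      push_cast at this
      convert this using 3
    have hsumle : ∑ j ∈ Finset.range (Y+1), (F j : ℝ) * (F (Y - j) : ℝ) ≤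
        ((Y+1 : ℕ) : ℝ) * Real.exp ((199/2) * (x:ℝ) ^ ((9:ℝ)/10)) := by
      have := Finset.sum_le_card_nsmul (Finset.range (Y+1))
        (fun j => (F j : ℝ) * (F (Y - j) : ℝ))
        (Real.exp ((199/2) * (x:ℝ) ^ ((9:ℝ)/10))) hterm
      rwa [Finset.card_range, nsmul_eq_mul] at this
    have h2Y : 2 * ((Y+1 : ℕ) : ℝ) ≤ Real.exp ((1/2) * (x:ℝ) ^ ((9:ℝ)/10)) := by
      have hle2x : 2 * ((Y+1 : ℕ) : ℝ) ≤ 2 * (x:ℝ) := by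
        have : ((Y+1 : ℕ) : ℝ) ≤ (x:ℝ) := by exact_mod_cast hYx
        linarith
      set t := (1/2) * (x:ℝ) ^ ((9:ℝ)/10) with ht
      have htpos : 0 ≤ t := by positivity
      have hexp := sq_div_four_le_exp htpos
      have hsq : t^2 = (1/4) * ((x:ℝ) ^ ((9:ℝ)/10))^2 := by rw [ht]; ring
      have hxx : ((x:ℝ) ^ ((9:ℝ)/10))^2 = (x:ℝ) ^ ((9:ℝ)/5) := by
        rw [← Real.rpow_natCast ((x:ℝ) ^ ((9:ℝ)/10)) 2, ← Real.rpow_mul hxpos.le]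
        norm_num
      have hx95 : (x:ℝ) ^ ((9:ℝ)/5) = (x:ℝ) * (x:ℝ) ^ ((4:ℝ)/5) := by
        rw [(by norm_num : (9:ℝ)/5 = 1 + 4/5), Real.rpow_add hxpos, Real.rpow_one]
      have h32 : (32:ℝ) ≤ (x:ℝ) ^ ((4:ℝ)/5) := by
        apply le_rpow_fourfifth hxpos.le (by norm_num)
        calc (32:ℝ)^(5:ℕ) ≤ (2100:ℝ)^(4:ℕ) := by norm_num
          _ ≤ (x:ℝ)^(4:ℕ) := by
              apply pow_le_pow_left₀ (by norm_num) hx2100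
      have hfinal : 2 * (x:ℝ) ≤ t^2/4 := by
        rw [hsq, hxx, hx95]
        nlinarith [hxpos]
      linarith
    calc (F x : ℝ) ≤ 2 * ∑ j ∈ Finset.range (Y+1), (F j : ℝ) * (F (Y - j) : ℝ) := hcast
      _ ≤ 2 * (((Y+1 : ℕ) : ℝ) * Real.exp ((199/2) * (x:ℝ) ^ ((9:ℝ)/10))) := by
          have hE : (0:ℝ) ≤ Real.exp ((199/2) * (x:ℝ) ^ ((9:ℝ)/10)) := (Real.exp_pos _).le
          nlinarith [hsumle]
      _ = (2 * ((Y+1 : ℕ) : ℝ)) * Real.exp ((199/2) * (x:ℝ) ^ ((9:ℝ)/10)) := by ring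
      _ ≤ Real.exp ((1/2) * (x:ℝ) ^ ((9:ℝ)/10)) *
            Real.exp ((199/2) * (x:ℝ) ^ ((9:ℝ)/10)) := by
          exact mul_le_mul_of_nonneg_right h2Y (Real.exp_pos _).le
      _ = Real.exp (100 * (x:ℝ) ^ ((9:ℝ)/10)) := by
          rw [← Real.exp_add]
          congr 1
          ring

end GrigAux

namespace GrigAux
open Grig L4

theorem word_of_list (l : List (Equiv.Perm (List Bool))) (hl : ∀ x ∈ l, x ∈ Grig.Sset) :
    ∃ w : List L4, w.length = l.length ∧ eval w = ⇑l.prod := by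
  induction l with
  | nil => exact ⟨[], rfl, by simp [eval]⟩
  | cons p l ih =>
    obtain ⟨w, hlen, hev⟩ := ih (fun x hx => hl x (List.mem_cons_of_mem p hx))
    have hp : p ∈ Grig.Sset := hl p List.mem_cons_self
    have : ∃ s : L4, evF s = ⇑p := by
      rcases hp with h | h | h | h
      · exact ⟨A, by rw [h]; exact (Function.Involutive.coe_toPerm _).symm⟩
      · exact ⟨B, by rw [h]; exact (Function.Involutive.coe_toPerm _).symm⟩
      · exact ⟨C, by rw [h]; exact (Function.Involutive.coe_toPerm _).symm⟩
      · exact ⟨D, by rw [Set.mem_singleton_iff.1 h]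
                     exact (Function.Involutive.coe_toPerm _).symm⟩
    obtain ⟨s, hs⟩ := this
    refine ⟨s :: w, by simp [hlen], ?_⟩
    rw [List.prod_cons]
    funext v
    simp [eval_cons, hs, hev]

def GrowSet (m : ℕ) : Set (Equiv.Perm (List Bool)) :=
  {g | ∃ l : List (Equiv.Perm (List Bool)),
    (∀ x ∈ l, x ∈ Grig.Sset) ∧ l.length ≤ m ∧ l.prod = g}

theorem growSet_maps (m : ℕ) (g : Equiv.Perm (List Bool)) (hg : g ∈ GrowSet m) :
    ⇑g ∈ Sx (125 * m) := by
  obtain ⟨l, hl, hlen, hprod⟩ := hg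
  obtain ⟨w, hwlen, hev⟩ := word_of_list l hl
  refine ⟨reduce w, isAlt_reduce w, ?_, by rw [eval_reduce, hev, hprod]⟩
  calc wtW (reduce w) ≤ wtW w := wtW_reduce w
    _ ≤ 125 * w.length := wtW_le_mul_length w
    _ ≤ 125 * m := by rw [hwlen]; exact Nat.mul_le_mul_left _ hlen

theorem growth_le_F (m : ℕ) : Grig.growthGrig m ≤ F (125 * m) := by
  have hinj : Function.Injective
      (fun g : GrowSet m => (⟨⇑(g : Equiv.Perm (List Bool)), growSet_maps m g g.2⟩ :
        Sx (125 * m))) := by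
    intro g g' h
    apply Subtype.ext
    apply Equiv.coe_fn_injective
    exact congrArg Subtype.val h
  exact Nat.card_le_card_of_injective _ hinj

theorem one_le_growth (m : ℕ) : 1 ≤ Grig.growthGrig m := by
  have hmem : (1 : Equiv.Perm (List Bool)) ∈ GrowSet m :=
    ⟨[], by simp, by simp, List.prod_nil⟩
  haveI : Finite (GrowSet m) := by
    have hinj : Function.Injective
        (fun g : GrowSet m => (⟨⇑(g : Equiv.Perm (List Bool)), growSet_maps m g g.2⟩ :
          Sx (125 * m))) := by
      intro g g' h
      apply Subtype.ext
      apply Equiv.coe_fn_injective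
      exact congrArg Subtype.val h
    exact Finite.of_injective _ hinj
  haveI : Nonempty (GrowSet m) := ⟨⟨1, hmem⟩⟩
  show 1 ≤ Nat.card (GrowSet m)
  exact Nat.card_pos

theorem growth_bound (m : ℕ) :
    (Grig.growthGrig m : ℝ) ≤ Real.exp (12500 * (m:ℝ) ^ ((9:ℝ)/10)) := by
  have h1 : (Grig.growthGrig m : ℝ) ≤ (F (125 * m) : ℝ) := by
    exact_mod_cast growth_le_F m
  have h2 := F_bound (125 * m)
  have h3 : 100 * (((125 * m : ℕ)):ℝ) ^ ((9:ℝ)/10) ≤ 12500 * (m:ℝ) ^ ((9:ℝ)/10) := by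
    have hc : (((125 * m : ℕ)):ℝ) = 125 * (m:ℝ) := by push_cast; ring
    rw [hc, Real.mul_rpow (by norm_num) (Nat.cast_nonneg m)]
    have h125 : (125:ℝ) ^ ((9:ℝ)/10) ≤ 125 := by
      have := Real.rpow_le_rpow_of_exponent_le (by norm_num : (1:ℝ) ≤ 125)
        (by norm_num : (9:ℝ)/10 ≤ 1)
      rwa [Real.rpow_one] at this
    have hm : (0:ℝ) ≤ (m:ℝ) ^ ((9:ℝ)/10) := Real.rpow_nonneg (Nat.cast_nonneg m) _
    nlinarith
  calc (Grig.growthGrig m : ℝ) ≤ (F (125 * m) : ℝ) := h1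
    _ ≤ Real.exp (100 * (((125 * m : ℕ)):ℝ) ^ ((9:ℝ)/10)) := h2
    _ ≤ Real.exp (12500 * (m:ℝ) ^ ((9:ℝ)/10)) := Real.exp_le_exp.2 h3

end GrigAux

/-- **Grigorchuk's theorem:** the first Grigorchuk group has subexponential growth.
More precisely, there are constants `C > 0` and `1/2 < γ < 1` with
`γ_𝒢^S(m) ≤ exp(C m^γ)` for every `m`; in particular the growth is subexponential,
i.e. `γ_𝒢^S(m)^{1/m} → 1`. -/
theorem grigorchuk_subexponential_growth :
    ∃ C : ℝ, 0 < C ∧ ∃ γ : ℝ, 1 / 2 < γ ∧ γ < 1 ∧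
      (∀ m : ℕ, (Grig.growthGrig m : ℝ) ≤ Real.exp (C * (m : ℝ) ^ γ)) ∧
      Filter.Tendsto (fun m : ℕ => (Grig.growthGrig m : ℝ) ^ (1 / (m : ℝ)))
        Filter.atTop (nhds 1) := by
  refine ⟨12500, by norm_num, (9:ℝ)/10, by norm_num, by norm_num, GrigAux.growth_bound, ?_⟩
  have hlow : ∀ m : ℕ, (1:ℝ) ≤ (Grig.growthGrig m : ℝ) ^ (1 / (m:ℝ)) := by
    intro m
    have h1 : (1:ℝ) ≤ (Grig.growthGrig m : ℝ) := by
      exact_mod_cast GrigAux.one_le_growth m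
    have := Real.rpow_le_rpow (z := 1/(m:ℝ)) (by norm_num : (0:ℝ) ≤ 1) h1 (by positivity)
    rwa [Real.one_rpow] at this
  have hupp : ∀ m : ℕ, 1 ≤ m →
      (Grig.growthGrig m : ℝ) ^ (1 / (m:ℝ)) ≤
        Real.exp (12500 * (m:ℝ) ^ (-(1:ℝ)/10)) := by
    intro m hm
    have hmpos : (0:ℝ) < (m:ℝ) := by exact_mod_cast hm
    have h1 : (Grig.growthGrig m : ℝ) ^ (1 / (m:ℝ)) ≤
        (Real.exp (12500 * (m:ℝ) ^ ((9:ℝ)/10))) ^ (1 / (m:ℝ)) :=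
      Real.rpow_le_rpow (Nat.cast_nonneg _) (GrigAux.growth_bound m) (by positivity)
    refine le_trans h1 (le_of_eq ?_)
    rw [← Real.exp_mul]
    congr 1
    have : (m:ℝ) ^ ((9:ℝ)/10) * (1 / (m:ℝ)) = (m:ℝ) ^ (-(1:ℝ)/10) := by
      rw [(by norm_num : -(1:ℝ)/10 = (9:ℝ)/10 + (-1)), Real.rpow_add hmpos,
        Real.rpow_neg_one]
      field_simp
    rw [mul_assoc, this]
  have hlim : Filter.Tendsto (fun m : ℕ => Real.exp (12500 * (m:ℝ) ^ (-(1:ℝ)/10)))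
      Filter.atTop (nhds 1) := by
    have h0 : Filter.Tendsto (fun m : ℕ => (m:ℝ) ^ (-(1:ℝ)/10)) Filter.atTop (nhds 0) := by
      have := (tendsto_rpow_neg_atTop (by norm_num : (0:ℝ) < 1/10)).comp
        (tendsto_natCast_atTop_atTop (R := ℝ))
      convert this using 2 with m
      · simp [Function.comp]
        norm_num
    have h2 : Filter.Tendsto (fun m : ℕ => 12500 * (m:ℝ) ^ (-(1:ℝ)/10))
        Filter.atTop (nhds 0) := by
      have := h0.const_mul (12500:ℝ)
      simpa using this
    have := (Real.continuous_exp.tendsto 0).comp h2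
    simpa [Function.comp_def] using this
  refine tendsto_of_tendsto_of_tendsto_of_le_of_le' tendsto_const_nhds hlim
    (Filter.Eventually.of_forall hlow) ?_
  filter_upwards [Filter.eventually_ge_atTop 1] with m hm
  exact hupp m hm


end
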